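/- Assume the Framework. Let p be a nonzero polynomial all of whose zeros lie in Ω, say with distinct zeros u₁, …, u_k of multiplicities r₁, …, r_k, and let p_H ∈ H be the element with ι p_H = p (it exists by (iv)). Then the closed linear span of {S^j p_H : j ≥ 0} equals {g ∈ H : for each 1 ≤ i ≤ k, (ι g)(u_i) = (ι g)′(u_i) = ⋯ = (ι g)^{(r_i − 1)}(u_i) = 0}, i.e. [p_H] consists exactly of those g ∈ H whose ι-image vanishes at every zero of p to at least the multiplicity of that zero. -/

import Mathlib

open scoped ComplexInnerProductSpace

/-- A Hilbert space `H` of analytic functions on a bounded domain `Ω ⊆ ℂ` with `0 ∈ Ω`,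
realized by an injective linear map `ι` into functions, satisfying conditions
(P1)–(P4) of Cheng–Mashreghi–Ross, together with its reproducing kernels. -/
structure RKFramework (Ω : Set ℂ) (H : Type*) [NormedAddCommGroup H]
    [InnerProductSpace ℂ H] [CompleteSpace H] where
  /-- `Ω` is open. -/
  isOpen : IsOpen Ω
  /-- `Ω` is connected. -/
  isConnected : IsConnected Ω
  /-- `Ω` is bounded. -/
  isBounded : Bornology.IsBounded Ω
  /-- `0 ∈ Ω`. -/
  zero_mem : (0 : ℂ) ∈ Ω
  /-- the realization of elements of `H` as functions (only values on `Ω` matter). -/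
  ι : H →ₗ[ℂ] (ℂ → ℂ)
  /-- `ι` is injective as a map into functions on `Ω`. -/
  ι_inj : ∀ f g : H, Set.EqOn (ι f) (ι g) Ω → f = g
  /-- each `ι f` is analytic on `Ω`. -/
  analytic : ∀ f : H, DifferentiableOn ℂ (ι f) Ω
  /-- (P1): point evaluation of every derivative is a bounded functional. -/
  eval_bounded : ∀ w ∈ Ω, ∀ j : ℕ, ∃ C : ℝ, ∀ f : H,
    ‖iteratedDerivWithin j (ι f) Ω w‖ ≤ C * ‖f‖
  /-- (P2): the shift operator `S`. -/
  S : H →L[ℂ] H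
  ι_S : ∀ f : H, ∀ z ∈ Ω, ι (S f) z = z * ι f z
  /-- (P3): the monomials `z^j` belong to `H` … -/
  p : ℕ → H
  ι_p : ∀ j : ℕ, ∀ z ∈ Ω, ι (p j) z = z ^ j
  /-- … and the polynomials are dense in `H`. -/
  span_p : (Submodule.span ℂ (Set.range p)).topologicalClosure = ⊤
  /-- (P4): the difference-quotient operators `Q_w`. -/
  Q : ℂ → H →L[ℂ] H
  ι_Q : ∀ w ∈ Ω, ∀ f : H, ∀ z ∈ Ω, z ≠ w → ι (Q w f) z = (ι f z - ι f w) / (z - w)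
  /-- the reproducing kernel `k_w` at `w ∈ Ω` … -/
  k : ℂ → H
  /-- … satisfying `⟪f, k_w⟫ = (ι f)(w)` (with the paper's inner product linear in its
  first slot; Mathlib's inner product is linear in the second slot). -/
  reproducing : ∀ w ∈ Ω, ∀ f : H, ⟪k w, f⟫ = ι f w

variable {Ω : Set ℂ} {H : Type*} [NormedAddCommGroup H] [InnerProductSpace ℂ H] [CompleteSpace H]

/-- `[zf]`: the closed linear span of `{S^n f : n ≥ 1}`. -/
abbrev RKFramework.zspan (F : RKFramework Ω H) (f : H) : Submodule ℂ H :=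
  (Submodule.span ℂ {x | ∃ n : ℕ, 1 ≤ n ∧ x = (F.S ^ n) f}).topologicalClosure

/-- `[f]`: the closed linear span of `{S^n f : n ≥ 0}`. -/
abbrev RKFramework.fullSpan (F : RKFramework Ω H) (f : H) : Submodule ℂ H :=
  (Submodule.span ℂ (Set.range fun n : ℕ => (F.S ^ n) f)).topologicalClosure

/-- The `S`-inner function `J = f − P_{[zf]} f` associated with `f`. -/
noncomputable def RKFramework.J (F : RKFramework Ω H) (f : H) : H :=
  f - (Submodule.orthogonalProjection (F.zspan f) f : H)


section Aux
open Polynomial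
variable (F : RKFramework Ω H)

lemma RKAux.iterWithin_isOpen {s : Set ℂ} (hs : IsOpen s) {f : ℂ → ℂ} {n : ℕ} {x : ℂ}
    (hx : x ∈ s) : iteratedDerivWithin n f s x = iteratedDeriv n f x := by
  simp only [iteratedDerivWithin, iteratedDeriv, iteratedFDerivWithin_of_isOpen n hs hx]

lemma RKAux.udo (F : RKFramework Ω H) : UniqueDiffOn ℂ Ω := F.isOpen.uniqueDiffOn

lemma RKAux.diffIter (f : H) (m : ℕ) :
    DifferentiableOn ℂ (iteratedDerivWithin m (F.ι f) Ω) Ω :=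
  ((F.analytic f).contDiffOn (n := ((m + 1 : ℕ) : WithTop ℕ∞)) F.isOpen
    ).differentiableOn_iteratedDerivWithin (by exact_mod_cast lt_add_one m)
    (RKAux.udo F)

lemma RKAux.leibniz (h1 : H) (u : ℂ) :
    ∀ s : ℕ, ∀ v ∈ Ω, iteratedDerivWithin (s + 1) (fun z => (z - u) * F.ι h1 z) Ω v
      = (v - u) * iteratedDerivWithin (s + 1) (F.ι h1) Ω v
        + ((s : ℂ) + 1) * iteratedDerivWithin s (F.ι h1) Ω v := by
  intro s
  induction s with
  | zero =>
    intro v hv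
    have hud := (RKAux.udo F).uniqueDiffWithinAt hv
    have hA : HasDerivWithinAt (fun z : ℂ => z - u) 1 Ω v :=
      (hasDerivWithinAt_id v Ω).sub_const u
    have hB : HasDerivWithinAt (F.ι h1) (derivWithin (F.ι h1) Ω v) Ω v :=
      (F.analytic h1 v hv).hasDerivWithinAt
    rw [iteratedDerivWithin_one, iteratedDerivWithin_one, iteratedDerivWithin_zero,
      HasDerivWithinAt.derivWithin (f := fun z => (z - u) * F.ι h1 z) (hA.mul hB) hud]
    ring
  | succ s IH =>
    intro v hv
    have hud := (RKAux.udo F).uniqueDiffWithinAt hv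
    have hEq : Set.EqOn (iteratedDerivWithin (s + 1) (fun z => (z - u) * F.ι h1 z) Ω)
        (fun z => (z - u) * iteratedDerivWithin (s + 1) (F.ι h1) Ω z
          + ((s : ℂ) + 1) * iteratedDerivWithin s (F.ι h1) Ω z) Ω := fun z hz => IH z hz
    have hB1 : HasDerivWithinAt (iteratedDerivWithin (s + 1) (F.ι h1) Ω)
        (iteratedDerivWithin (s + 1 + 1) (F.ι h1) Ω v) Ω v := by
      have := (RKAux.diffIter F h1 (s + 1) v hv).hasDerivWithinAt
      rwa [← iteratedDerivWithin_succ] at this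
    have hB0 : HasDerivWithinAt (iteratedDerivWithin s (F.ι h1) Ω)
        (iteratedDerivWithin (s + 1) (F.ι h1) Ω v) Ω v := by
      have := (RKAux.diffIter F h1 s v hv).hasDerivWithinAt
      rwa [← iteratedDerivWithin_succ] at this
    have hA : HasDerivWithinAt (fun z : ℂ => z - u) 1 Ω v :=
      (hasDerivWithinAt_id v Ω).sub_const u
    have hsum := (hA.mul hB1).add (hB0.const_mul ((s : ℂ) + 1))
    rw [iteratedDerivWithin_succ, derivWithin_congr hEq (hEq hv),
      HasDerivWithinAt.derivWithin (f := fun z => (z - u) * iteratedDerivWithin (s + 1) (F.ι h1) Ω z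
        + ((s : ℂ) + 1) * iteratedDerivWithin s (F.ι h1) Ω z) hsum hud]
    push_cast
    ring

lemma RKAux.congrIter (F : RKFramework Ω H) {f g : ℂ → ℂ} (hEq : Set.EqOn f g Ω) {n : ℕ} {x : ℂ} (hx : x ∈ Ω) :
    iteratedDerivWithin n f Ω x = iteratedDerivWithin n g Ω x :=
  iteratedDerivWithin_congr hEq hx

lemma RKAux.trans_ne (g g1 : H) (u v : ℂ) (hv : v ∈ Ω) (hvu : v ≠ u)
    (heq : ∀ z ∈ Ω, F.ι g z = (z - u) * F.ι g1 z) (r : ℕ)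
    (hvan : ∀ s, s < r → iteratedDerivWithin s (F.ι g) Ω v = 0) :
    ∀ s, s < r → iteratedDerivWithin s (F.ι g1) Ω v = 0 := by
  have hvu' : v - u ≠ 0 := sub_ne_zero.mpr hvu
  have hEq : Set.EqOn (F.ι g) (fun z => (z - u) * F.ι g1 z) Ω := fun z hz => heq z hz
  intro s
  induction s with
  | zero =>
    intro hr
    have h0 := hvan 0 hr
    rw [iteratedDerivWithin_zero] at h0
    rw [iteratedDerivWithin_zero]
    have h1 := heq v hv
    rw [h0] at h1
    rcases mul_eq_zero.mp h1.symm with h | h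
    · exact absurd h hvu'
    · exact h
  | succ s IH =>
    intro hr
    have h1 := hvan (s + 1) hr
    rw [RKAux.congrIter F hEq hv, RKAux.leibniz F g1 u s v hv,
      IH (Nat.lt_of_succ_lt hr), mul_zero, add_zero] at h1
    rcases mul_eq_zero.mp h1 with h | h
    · exact absurd h hvu'
    · exact h

lemma RKAux.trans_eq (g g1 : H) (u : ℂ) (hu : u ∈ Ω)
    (heq : ∀ z ∈ Ω, F.ι g z = (z - u) * F.ι g1 z) (s : ℕ)
    (hvan : iteratedDerivWithin (s + 1) (F.ι g) Ω u = 0) :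
    iteratedDerivWithin s (F.ι g1) Ω u = 0 := by
  have hEq : Set.EqOn (F.ι g) (fun z => (z - u) * F.ι g1 z) Ω := fun z hz => heq z hz
  rw [RKAux.congrIter F hEq hu, RKAux.leibniz F g1 u s u hu, sub_self, zero_mul,
    zero_add] at hvan
  rcases mul_eq_zero.mp hvan with h | h
  · exfalso
    have hne : ((s : ℂ) + 1) ≠ 0 := by
      have h2 : ((s + 1 : ℕ) : ℂ) ≠ 0 := Nat.cast_ne_zero.mpr (Nat.succ_ne_zero s)
      push_cast at h2
      exact h2
    exact hne h
  · exact h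

lemma RKAux.iota_pow (n : ℕ) : ∀ (f : H), ∀ z ∈ Ω, F.ι ((F.S ^ n) f) z = z ^ n * F.ι f z := by
  induction n with
  | zero => intro f z hz; simp
  | succ n IH =>
    intro f z hz
    have h1 : (F.S ^ (n + 1)) f = (F.S ^ n) (F.S f) := by
      rw [pow_succ]; rfl
    rw [h1, IH (F.S f) z hz, F.ι_S f z hz, pow_succ]
    ring

lemma RKAux.iota_aeval (P : Polynomial ℂ) (f : H) :
    ∀ z ∈ Ω, F.ι ((Polynomial.aeval F.S P) f) z = P.eval z * F.ι f z := by
  induction P using Polynomial.induction_on' with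
  | add p q hp hq =>
    intro z hz
    rw [map_add, ContinuousLinearMap.add_apply, map_add, Pi.add_apply, hp z hz, hq z hz,
      Polynomial.eval_add]
    ring
  | monomial n a =>
    intro z hz
    rw [Polynomial.aeval_monomial]
    have h1 : ((algebraMap ℂ (H →L[ℂ] H) a) * F.S ^ n) f = a • ((F.S ^ n) f) := by
      simp [Algebra.algebraMap_eq_smul_one]
    rw [h1, map_smul, Pi.smul_apply, smul_eq_mul, Polynomial.eval_monomial,
      RKAux.iota_pow F n f z hz]
    ring

lemma RKAux.aeval_mem (q : Polynomial ℂ) (pH : H) (hpH : ∀ z ∈ Ω, F.ι pH z = q.eval z)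
    (h : H) : (Polynomial.aeval F.S q) h ∈ F.fullSpan pH := by
  set T : H →L[ℂ] H := Polynomial.aeval F.S q with hT
  let K : Submodule ℂ H := (F.fullSpan pH).comap (T : H →ₗ[ℂ] H)
  have hKclosed : IsClosed (K : Set H) := by
    have h1 : IsClosed ((F.fullSpan pH : Submodule ℂ H) : Set H) :=
      Submodule.isClosed_topologicalClosure _
    exact h1.preimage T.continuous
  have hgen : ∀ n : ℕ, T (F.p n) = (F.S ^ n) pH := by
    intro n
    apply F.ι_inj
    intro z hz
    rw [hT]
    rw [RKAux.iota_aeval F q (F.p n) z hz, RKAux.iota_pow F n pH z hz, F.ι_p n z hz,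
      hpH z hz]
    ring
  have hle : Submodule.span ℂ (Set.range F.p) ≤ K := by
    rw [Submodule.span_le]
    rintro x ⟨n, rfl⟩
    show T (F.p n) ∈ F.fullSpan pH
    rw [hgen n]
    exact Submodule.le_topologicalClosure _ (Submodule.subset_span ⟨n, rfl⟩)
  have htop : (Submodule.span ℂ (Set.range F.p)).topologicalClosure ≤ K :=
    Submodule.topologicalClosure_minimal _ hle hKclosed
  rw [F.span_p] at htop
  exact htop trivial

lemma RKAux.const_case (P : Polynomial ℂ) (hP0 : P ≠ 0) (hd : P.natDegree = 0) (g : H) :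
    ∃ h : H, ∀ z ∈ Ω, F.ι g z = P.eval z * F.ι h z := by
  set c := P.coeff 0 with hc0
  have hPC : P = Polynomial.C c := Polynomial.eq_C_of_natDegree_eq_zero hd
  have hc : c ≠ 0 := fun h => hP0 (by rw [hPC, h, map_zero])
  refine ⟨c⁻¹ • g, fun z hz => ?_⟩
  rw [hPC, Polynomial.eval_C, map_smul, Pi.smul_apply, smul_eq_mul]
  field_simp

lemma RKAux.lemA :
    ∀ (n : ℕ) (P : Polynomial ℂ), P ≠ 0 → P.natDegree ≤ n →
      (∀ z : ℂ, P.eval z = 0 → z ∈ Ω) → ∀ g : H,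
      (∀ u : ℂ, P.eval u = 0 → ∀ s : ℕ, s < P.rootMultiplicity u →
        iteratedDerivWithin s (F.ι g) Ω u = 0) →
      ∃ h : H, ∀ z ∈ Ω, F.ι g z = P.eval z * F.ι h z := by
  intro n
  induction n with
  | zero =>
    intro P hP0 hdeg _ g _
    exact RKAux.const_case F P hP0 (Nat.le_zero.mp hdeg) g
  | succ n IH =>
    intro P hP0 hdeg hPr g hvan
    by_cases hd0 : P.natDegree = 0
    · exact RKAux.const_case F P hP0 hd0 g
    · have hdegne : P.degree ≠ 0 := by
        rw [Polynomial.degree_eq_natDegree hP0]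
        exact_mod_cast hd0
      obtain ⟨u, hu⟩ := IsAlgClosed.exists_root P hdegne
      have huΩ : u ∈ Ω := hPr u hu
      set P₁ := P / (Polynomial.X - Polynomial.C u) with hP₁
      have hfac : (Polynomial.X - Polynomial.C u) * P₁ = P :=
        Polynomial.mul_div_eq_iff_isRoot.mpr hu
      have hP₁0 : P₁ ≠ 0 := fun h => hP0 (by rw [← hfac, h, mul_zero])
      have hXC : (Polynomial.X - Polynomial.C u : Polynomial ℂ) ≠ 0 :=
        Polynomial.X_sub_C_ne_zero u
      have hdeg1 : P.natDegree = 1 + P₁.natDegree := by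
        rw [← hfac, Polynomial.natDegree_mul hXC hP₁0, Polynomial.natDegree_X_sub_C]
      have hvan0 : F.ι g u = 0 := by
        have := hvan u hu 0 ((Polynomial.rootMultiplicity_pos hP0).mpr hu)
        rwa [iteratedDerivWithin_zero] at this
      set g1 := F.Q u g with hg1
      have heq : ∀ z ∈ Ω, F.ι g z = (z - u) * F.ι g1 z := by
        intro z hz
        by_cases hzu : z = u
        · rw [hzu, hvan0, sub_self, zero_mul]
        · have hzu' : z - u ≠ 0 := sub_ne_zero.mpr hzu
          rw [hg1, F.ι_Q u huΩ g z hz hzu, hvan0, sub_zero]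
          field_simp
      have hvan₁ : ∀ v : ℂ, P₁.eval v = 0 → ∀ s : ℕ, s < P₁.rootMultiplicity v →
          iteratedDerivWithin s (F.ι g1) Ω v = 0 := by
        intro v hv s hs
        have hvP : P.eval v = 0 := by
          rw [← hfac, Polynomial.eval_mul, hv, mul_zero]
        have hvΩ : v ∈ Ω := hPr v hvP
        by_cases hvu : v = u
        · subst hvu
          have hm : P.rootMultiplicity v = 1 + P₁.rootMultiplicity v := by
            rw [← hfac, Polynomial.rootMultiplicity_mul (hfac ▸ hP0),
              Polynomial.rootMultiplicity_X_sub_C_self]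
          exact RKAux.trans_eq F g g1 v hvΩ heq s (hvan v hvP (s + 1) (by omega))
        · have hm : P.rootMultiplicity v = P₁.rootMultiplicity v := by
            rw [← hfac, Polynomial.rootMultiplicity_mul (hfac ▸ hP0),
              Polynomial.rootMultiplicity_eq_zero
                (by simp [Polynomial.IsRoot, sub_eq_zero, hvu]), zero_add]
          exact RKAux.trans_ne F g g1 u v hvΩ hvu heq (P₁.rootMultiplicity v)
            (fun t ht => hvan v hvP t (by omega)) s hs
      obtain ⟨h, hh⟩ := IH P₁ hP₁0 (by omega)
        (fun z hz => hPr z (by rw [← hfac, Polynomial.eval_mul, hz, mul_zero])) g1 hvan₁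
      refine ⟨h, fun z hz => ?_⟩
      rw [heq z hz, hh z hz, ← hfac, Polynomial.eval_mul, Polynomial.eval_sub,
        Polynomial.eval_X, Polynomial.eval_C]
      ring

lemma RKAux.iteratedDeriv_polyeval (s : ℕ) :
    ∀ (P : Polynomial ℂ) (x : ℂ), iteratedDeriv s (fun z => Polynomial.eval z P) x
      = Polynomial.eval x (Polynomial.derivative^[s] P) := by
  induction s with
  | zero => intro P x; simp
  | succ s IH =>
    intro P x
    rw [iteratedDeriv_succ']
    have h1 : deriv (fun z => Polynomial.eval z P)
        = fun z => Polynomial.eval z (Polynomial.derivative P) :=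
      funext fun z => Polynomial.deriv P
    rw [h1, IH, Function.iterate_succ_apply]

end Aux

/-- Lemma 4.1: for a nonzero polynomial `p` with all zeros in `Ω`, realized as `pH ∈ H`,
the invariant subspace `[pH]` consists exactly of the `g ∈ H` whose `ι`-image vanishes
at every zero of `p` to at least the multiplicity of that zero. -/
theorem stmt5 (F : RKFramework Ω H)
    (q : Polynomial ℂ) (hq : q ≠ 0) (hroots : ∀ z : ℂ, q.eval z = 0 → z ∈ Ω)
    (pH : H) (hpH : ∀ z ∈ Ω, F.ι pH z = q.eval z) :
    ((F.fullSpan pH : Submodule ℂ H) : Set H) =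
      {g : H | ∀ u : ℂ, q.eval u = 0 →
        ∀ s : ℕ, s < q.rootMultiplicity u → iteratedDerivWithin s (F.ι g) Ω u = 0} := by
  ext g
  simp only [SetLike.mem_coe, Set.mem_setOf_eq]
  constructor
  · intro hg u hu s hs
    have huΩ : u ∈ Ω := hroots u hu
    obtain ⟨C, hC⟩ := F.eval_bounded u huΩ s
    let φ : H →ₗ[ℂ] ℂ :=
      { toFun := fun f => iteratedDerivWithin s (F.ι f) Ω u
        map_add' := by
          intro f g'
          have h1 : F.ι (f + g') = F.ι f + F.ι g' := map_add F.ι f g'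
          show iteratedDerivWithin s (F.ι (f + g')) Ω u = _
          rw [h1]
          exact iteratedDerivWithin_add huΩ (RKAux.udo F)
            (((F.analytic f).contDiffOn F.isOpen).contDiffWithinAt huΩ) (((F.analytic g').contDiffOn F.isOpen).contDiffWithinAt huΩ)
        map_smul' := by
          intro c f
          have h1 : F.ι (c • f) = c • F.ι f := map_smul F.ι c f
          show iteratedDerivWithin s (F.ι (c • f)) Ω u = _
          rw [h1, iteratedDerivWithin_const_smul huΩ (RKAux.udo F) c
            (((F.analytic f).contDiffOn F.isOpen).contDiffWithinAt huΩ)]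
          simp }
    let φc : H →L[ℂ] ℂ := LinearMap.mkContinuous φ C (fun f => hC f)
    have hker : F.fullSpan pH ≤ LinearMap.ker (φc : H →ₗ[ℂ] ℂ) := by
      apply Submodule.topologicalClosure_minimal
      · rw [Submodule.span_le]
        rintro x ⟨n, rfl⟩
        simp only [SetLike.mem_coe, LinearMap.mem_ker]
        show iteratedDerivWithin s (F.ι ((F.S ^ n) pH)) Ω u = 0
        have hEq : Set.EqOn (F.ι ((F.S ^ n) pH))
            (fun z => Polynomial.eval z (Polynomial.X ^ n * q)) Ω := by
          intro z hz
          rw [RKAux.iota_pow F n pH z hz, hpH z hz]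
          simp [Polynomial.eval_mul]
        rw [RKAux.congrIter F hEq huΩ, RKAux.iterWithin_isOpen F.isOpen huΩ,
          RKAux.iteratedDeriv_polyeval s (Polynomial.X ^ n * q) u]
        have hne : (Polynomial.X ^ n * q : Polynomial ℂ) ≠ 0 :=
          mul_ne_zero (pow_ne_zero n Polynomial.X_ne_zero) hq
        have hlt : s < (Polynomial.X ^ n * q).rootMultiplicity u :=
          lt_of_lt_of_le hs (le_trans (Nat.le_add_left _ _)
            (Polynomial.le_rootMultiplicity_mul u hne))
        exact Polynomial.isRoot_iterate_derivative_of_lt_rootMultiplicity hlt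
      · exact ContinuousLinearMap.isClosed_ker φc
    have hmem := hker hg
    rw [LinearMap.mem_ker] at hmem
    exact hmem
  · intro hg
    obtain ⟨h, hh⟩ := RKAux.lemA F q.natDegree q hq le_rfl hroots g hg
    have hgeq : g = (Polynomial.aeval F.S q) h := by
      apply F.ι_inj
      intro z hz
      rw [hh z hz, RKAux.iota_aeval F q h z hz]
    rw [hgeq]
    exact RKAux.aeval_mem F q pH hpH h
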